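/- Let R = R(M⃗) be a single-block R-cross-section of IS_n, corresponding to the trivial decomposition N_n = M with linear order M = {m_1 < m_2 < … < m_n}. Then the idempotents of R are exactly the empty map 0 together with the restrictions of the identity map to the upper segments {m_j, m_{j+1}, …, m_n}, for 1 ≤ j ≤ n. -/

import Mathlib

open scoped Classical

/-- `IS n` is the full inverse symmetric semigroup: all partial bijections of `Fin n`;
multiplication is composition of partial maps (maps acting on the right). -/
abbrev IS (n : ℕ) : Type := PEquiv (Fin n) (Fin n)

noncomputable section
namespace ISW

instance {n : ℕ} : Mul (IS n) := ⟨PEquiv.trans⟩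
instance {n : ℕ} : One (IS n) := ⟨PEquiv.refl _⟩

/-- The domain of a partial bijection. -/
def pdom {n : ℕ} (f : IS n) : Set (Fin n) := {x | (f x).isSome}

/-- The range of a partial bijection. -/
def pran {n : ℕ} (f : IS n) : Set (Fin n) := {y | (f.symm y).isSome}

/-- Green's R-relation on a semigroup (with identity): `u R v` iff `uS = vS`. -/
def GreenR {S : Type*} [Mul S] (u v : S) : Prop :=
  {w | ∃ s, w = u * s} = {w | ∃ s, w = v * s}

/-- Green's L-relation on a semigroup (with identity): `u L v` iff `Su = Sv`. -/
def GreenL {S : Type*} [Mul S] (u v : S) : Prop :=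
  {w | ∃ s, w = s * u} = {w | ∃ s, w = s * v}

/-- An R-cross-section: a subsemigroup containing exactly one element of every
Green R-class. -/
def IsRCrossSection {S : Type*} [Mul S] (T : Set S) : Prop :=
  (∀ a ∈ T, ∀ b ∈ T, a * b ∈ T) ∧ ∀ x : S, ∃! t, t ∈ T ∧ GreenR x t

/-- An L-cross-section: a subsemigroup containing exactly one element of every
Green L-class. -/
def IsLCrossSection {S : Type*} [Mul S] (T : Set S) : Prop :=
  (∀ a ∈ T, ∀ b ∈ T, a * b ∈ T) ∧ ∀ x : S, ∃! t, t ∈ T ∧ GreenL x t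

/-- `φ` realizes a semigroup isomorphism from `T₁` onto `T₂`. -/
def IsSemiIso {S₁ S₂ : Type*} [Mul S₁] [Mul S₂] (T₁ : Set S₁) (T₂ : Set S₂)
    (φ : S₁ → S₂) : Prop :=
  Set.BijOn φ T₁ T₂ ∧ ∀ a ∈ T₁, ∀ b ∈ T₁, φ (a * b) = φ a * φ b

/-- The partial wreath product `IS m ≀_p IS n`: pairs `(f, a)` with `a ∈ IS n` and
`f` a partial map from `Fin n` to `IS m` whose domain equals the domain of `a`. -/
structure PW (m n : ℕ) where
  base : IS n
  fib : Fin n → Option (IS m)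
  dom_eq : ∀ x, (fib x).isSome ↔ (base x).isSome

/-- Multiplication of the partial wreath product: `(f,a)·(g,b) = (f g^a, ab)`. -/
instance {m n : ℕ} : Mul (PW m n) where
  mul u v :=
    { base := u.base * v.base
      fib := fun x => Option.map₂ (· * ·) (u.fib x) ((u.base x).bind v.fib)
      dom_eq := by
        intro x
        show _ ↔ (((u.base x).bind v.base)).isSome
        cases h : u.base x with
        | none =>
          have : u.fib x = none := by
            have := (u.dom_eq x)
            simp [h] at this
            simpa using Option.not_isSome_iff_eq_none.mp (by simp [this])
          simp [h, this, Option.map₂]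
        | some y =>
          have hf : (u.fib x).isSome := (u.dom_eq x).mpr (by simp [h])
          obtain ⟨s, hs⟩ := Option.isSome_iff_exists.mp hf
          cases h2 : v.base y with
          | none =>
            have : v.fib y = none := by
              have := (v.dom_eq y)
              simp [h2] at this
              simpa using Option.not_isSome_iff_eq_none.mp (by simp [this])
            simp [h, h2, hs, this, Option.map₂]
          | some z =>
            have hg : (v.fib y).isSome := (v.dom_eq y).mpr (by simp [h2])
            obtain ⟨t, ht⟩ := Option.isSome_iff_exists.mp hg
            simp [h, h2, hs, ht, Option.map₂] }

/-- The identity of the partial wreath product. -/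
instance {m n : ℕ} : One (PW m n) where
  one :=
    { base := 1
      fib := fun _ => some 1
      dom_eq := by intro x; simp; rfl }

/-- `chainFun L j x`: with `L` listing the elements of a block in increasing order and
`0 ≤ j < |L|` (`j` is the 0-based version of the paper's index), this is the value at `x` of
the chain `a_{i,j}`: the partial bijection with domain everything except `L[j]`,
sending `L[l] ↦ L[l+1]` for `l < j` and fixing all other points. -/
def chainFun {n : ℕ} (L : List (Fin n)) (j : ℕ) (x : Fin n) : Option (Fin n) :=
  if x ∈ L then
    if L.idxOf x = j then none
    else if L.idxOf x < j then L[L.idxOf x + 1]?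
    else some x
  else some x

/-- The generators `a_{i,j}` attached to an ordered decomposition with blocks `B i`. -/
def RGens {n s : ℕ} (B : Fin s → List (Fin n)) : Set (IS n) :=
  {a : IS n | ∃ i : Fin s, ∃ j : ℕ, j < (B i).length ∧ ∀ x, a x = chainFun (B i) j x}

/-- `R(M⃗₁, …, M⃗ₛ)`: the subsemigroup of `IS n` generated by the chains `a_{i,j}`
together with the identity map. -/
def RSec {n s : ℕ} (B : Fin s → List (Fin n)) : Set (IS n) :=
  (Subsemigroup.closure (RGens B ∪ {1}) : Subsemigroup (IS n))

/-- A decomposition of `Fin n` into disjoint nonempty blocks, each block equipped with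
a linear order, recorded by listing the elements of each block in increasing order. -/
structure OrderedPartition (n s : ℕ) where
  B : Fin s → List (Fin n)
  nonempty : ∀ i, B i ≠ []
  nodup : ∀ i, (B i).Nodup
  disjoint : ∀ i j, i ≠ j → ∀ x, x ∈ B i → x ∉ B j
  cover : ∀ x, ∃ i, x ∈ B i

/-- The chain `a_{i,j}` of the block listed by `L`, viewed inside `IS(M_i)`, i.e. embedded
into `IS n` as a partial bijection whose domain is contained in the block: it is defined on
`L` minus `L[j]`, sends `L[l] ↦ L[l+1]` for `l < j` and fixes the other points of `L`. -/
def chainFunB {n : ℕ} (L : List (Fin n)) (j : ℕ) (x : Fin n) : Option (Fin n) :=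
  if x ∈ L then
    if L.idxOf x = j then none
    else if L.idxOf x < j then L[L.idxOf x + 1]?
    else some x
  else none

/-- The generators of `R(M⃗)` inside `IS(M)` (embedded in `IS n`), `M` listed by `L`. -/
def BlockGens {n : ℕ} (L : List (Fin n)) : Set (IS n) :=
  {a : IS n | ∃ j : ℕ, j < L.length ∧ ∀ x, a x = chainFunB L j x}

/-- The identity of `IS(M)` (embedded in `IS n`): the identity map of the block listed by `L`. -/
def idOn {n : ℕ} (L : List (Fin n)) : Set (IS n) :=
  {a : IS n | ∀ x, a x = if x ∈ L then some x else none}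

/-- The R-cross-section `R(M⃗)` of `IS(M)`, embedded into `IS n`, for the block listed by `L`. -/
def RSecBlock {n : ℕ} (L : List (Fin n)) : Set (IS n) :=
  (Subsemigroup.closure (BlockGens L ∪ idOn L) : Subsemigroup (IS n))

/-- The wreath product `R_i ≀_p R(M⃗_i)` where `R(M⃗_i) ⊆ IS(M_i)`, `M_i` listed by `L`,
and `R_i = T ⊆ IS m`, realized inside `PW m n` via the natural embedding
`IS m ≀_p IS(M_i) ⊆ IS m ≀_p IS n`. -/
def WBlock (m n : ℕ) (L : List (Fin n)) (T : Set (IS m)) : Set (PW m n) :=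
  {u : PW m n | u.base ∈ RSecBlock L ∧ ∀ x f, u.fib x = some f → f ∈ T}

/-- The element `e' = (0̄, 1)` of `IS m ≀_p IS n`: the second component is the identity of
`IS n` and the first component sends every point to the empty map `0` of `IS m`. -/
def ezero (m n : ℕ) : PW m n where
  base := 1
  fib := fun _ => some ⊥
  dom_eq := by intro x; simp; rfl


section Aux
variable {n : ℕ} {L : List (Fin n)}

lemma mul_apply (a b : IS n) (x : Fin n) : (a * b) x = (a x).bind b := rfl

lemma one_apply (x : Fin n) : (1 : IS n) x = some x := rfl

lemma mem_all (hnd : L.Nodup) (hlen : L.length = n) (x : Fin n) : x ∈ L := by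
  have h1 : L.toFinset = Finset.univ := by
    apply Finset.eq_univ_of_card
    rw [List.toFinset_card_of_nodup hnd, hlen, Fintype.card_fin]
  have := Finset.mem_univ x
  rwa [← h1, List.mem_toFinset] at this

lemma idx_lt (hnd : L.Nodup) (hlen : L.length = n) (x : Fin n) : L.idxOf x < n := by
  have := List.idxOf_lt_length_iff.2 (mem_all hnd hlen x)
  omega

lemma mem_drop_iff (hnd : L.Nodup) (hlen : L.length = n) (j : ℕ) (x : Fin n) :
    x ∈ L.drop j ↔ j ≤ L.idxOf x := by
  constructor
  · intro h
    obtain ⟨i, hi, heq⟩ := List.mem_iff_getElem.1 h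
    rw [List.getElem_drop] at heq
    subst heq
    rw [List.Nodup.idxOf_getElem hnd]
    omega
  · intro h
    have hlt : L.idxOf x < L.length := List.idxOf_lt_length_iff.2 (mem_all hnd hlen x)
    rw [List.mem_iff_getElem]
    refine ⟨L.idxOf x - j, by simp [List.length_drop]; omega, ?_⟩
    rw [List.getElem_drop]
    have : j + (L.idxOf x - j) = L.idxOf x := by omega
    simp_rw [this]
    exact List.getElem_idxOf hlt

/-- The key invariant preserved by the generators of `R(M⃗)`: the map is strictly
monotone with respect to the positions in `L`, and its range is upward closed. -/
def Good (L : List (Fin n)) (b : IS n) : Prop :=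
  (∀ x y x' y', b x = some x' → b y = some y' →
      L.idxOf x < L.idxOf y → L.idxOf x' < L.idxOf y') ∧
  (∀ y z, (∃ x, b x = some y) → L.idxOf y ≤ L.idxOf z → ∃ x, b x = some z)

lemma good_one : Good L (1 : IS n) := by
  constructor
  · intro x y x' y' hx hy hlt
    rw [one_apply] at hx hy
    cases hx; cases hy; exact hlt
  · intro y z _ _; exact ⟨z, rfl⟩

lemma good_mul {b c : IS n} (hb : Good L b) (hc : Good L c) : Good L (b * c) := by
  obtain ⟨mb, ub⟩ := hb
  obtain ⟨mc, uc⟩ := hc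
  constructor
  · intro x y x' y' hx hy hlt
    rw [mul_apply, Option.bind_eq_some_iff] at hx hy
    obtain ⟨u, hu, hu'⟩ := hx
    obtain ⟨v, hv, hv'⟩ := hy
    exact mc _ _ _ _ hu' hv' (mb _ _ _ _ hu hv hlt)
  · intro y z hy hle
    obtain ⟨x, hx⟩ := hy
    rw [mul_apply, Option.bind_eq_some_iff] at hx
    obtain ⟨u, hu, hu'⟩ := hx
    obtain ⟨w, hw⟩ := uc y z ⟨u, hu'⟩ hle
    have hwu : L.idxOf u ≤ L.idxOf w := by
      by_contra hcon
      exact absurd (mc _ _ _ _ hw hu' (by omega)) (by omega)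
    obtain ⟨v, hv⟩ := ub u w ⟨x, hu⟩ hwu
    exact ⟨v, by rw [mul_apply, hv, Option.bind_some, hw]⟩

lemma gen_appVal (hnd : L.Nodup) (hlen : L.length = n) {j : ℕ} (hj : j < n) {b : IS n}
    (hfun : ∀ x, b x = chainFun L j x) {x x' : Fin n} (h : b x = some x') :
    (L.idxOf x < j ∧ L.idxOf x' = L.idxOf x + 1) ∨ (j < L.idxOf x ∧ x' = x) := by
  rw [hfun, chainFun, if_pos (mem_all hnd hlen x)] at h
  rcases lt_trichotomy (L.idxOf x) j with hlt | heq | hgt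
  · left
    rw [if_neg (by omega), if_pos hlt] at h
    have hb : L.idxOf x + 1 < L.length := by omega
    rw [List.getElem?_eq_getElem hb] at h
    cases h
    exact ⟨hlt, List.Nodup.idxOf_getElem hnd _ hb⟩
  · rw [if_pos heq] at h; cases h
  · right
    rw [if_neg (by omega), if_neg (by omega)] at h
    cases h
    exact ⟨hgt, rfl⟩

lemma good_gen (hnd : L.Nodup) (hlen : L.length = n) {j : ℕ} (hj : j < n) {b : IS n}
    (hfun : ∀ x, b x = chainFun L j x) : Good L b := by
  constructor
  · intro x y x' y' hx hy hlt
    rcases gen_appVal hnd hlen hj hfun hx with ⟨h1, h2⟩ | ⟨h1, h2⟩ <;>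
      rcases gen_appVal hnd hlen hj hfun hy with ⟨h3, h4⟩ | ⟨h3, h4⟩ <;>
      subst_eqs <;> omega
  · intro y z hy hle
    have hy1 : 1 ≤ L.idxOf y := by
      obtain ⟨x, hx⟩ := hy
      rcases gen_appVal hnd hlen hj hfun hx with ⟨h1, h2⟩ | ⟨h1, h2⟩ <;> subst_eqs <;> omega
    have hz1 : 1 ≤ L.idxOf z := le_trans hy1 hle
    by_cases hzj : L.idxOf z ≤ j
    · have hb : L.idxOf z - 1 < L.length := by omega
      refine ⟨L[L.idxOf z - 1], ?_⟩
      rw [hfun, chainFun, if_pos (mem_all hnd hlen _), List.Nodup.idxOf_getElem hnd _ hb,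
        if_neg (by omega), if_pos (by omega)]
      have : L.idxOf z - 1 + 1 = L.idxOf z := by omega
      rw [this, List.getElem?_eq_getElem (List.idxOf_lt_length_iff.2 (mem_all hnd hlen z)),
        List.getElem_idxOf]
    · refine ⟨z, ?_⟩
      rw [hfun, chainFun, if_pos (mem_all hnd hlen _), if_neg (by omega), if_neg (by omega)]

end Aux

/-- the idempotents of the single-block R-cross-section `R(M⃗)` of `IS n`
with `M = {m_1 < … < m_n}` listed by `L` are exactly the empty map `0` together with the
restrictions of the identity to the upper segments `{m_{j+1}, …, m_n}` (`L.drop j`,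
`0 ≤ j < n`). -/
theorem single_block_idempotents (n : ℕ) (L : List (Fin n)) (hnd : L.Nodup)
    (hlen : L.length = n) (a : IS n) (ha : a ∈ RSec (fun _ : Fin 1 => L)) :
    a * a = a ↔
      ((∀ x, a x = none) ∨
        ∃ j : ℕ, j < n ∧ ∀ x : Fin n, a x = if x ∈ L.drop j then some x else none) := by
  constructor
  · intro h
    -- `a` satisfies the invariant
    have hgood : Good L a := by
      have ha' : a ∈ Subsemigroup.closure (RGens (fun _ : Fin 1 => L) ∪ {1}) := ha
      refine Subsemigroup.closure_induction ?_ ?_ ha'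
      · intro x hx
        rcases hx with hx | hx
        · obtain ⟨i, j, hj, hfun⟩ := hx
          exact good_gen hnd hlen (hlen ▸ hj) hfun
        · rw [Set.mem_singleton_iff] at hx
          subst hx
          exact good_one
      · intro x y _ _ hx hy
        exact good_mul hx hy
    -- idempotency forces `a` to be a partial identity
    have hpid : ∀ x y : Fin n, a x = some y → y = x := by
      intro x y hxy
      have h1 : a y = some y := by
        have h2 : (a * a) x = a x := by rw [h]
        rw [mul_apply, hxy, Option.bind_some] at h2
        exact h2
      have e1 := (PEquiv.eq_some_iff a).2 hxy
      have e2 := (PEquiv.eq_some_iff a).2 h1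
      rw [e1] at e2
      exact (Option.some.inj e2).symm
    by_cases hne : ∃ x : Fin n, (a x).isSome
    · right
      obtain ⟨x0, hx0⟩ := hne
      obtain ⟨y0, hy0⟩ := Option.isSome_iff_exists.1 hx0
      have hfix0 : a x0 = some x0 := by rw [hy0, hpid x0 y0 hy0]
      have hW : ∃ k : ℕ, ∃ x : Fin n, a x = some x ∧ L.idxOf x = k := ⟨_, x0, hfix0, rfl⟩
      refine ⟨Nat.find hW, ?_, ?_⟩
      · obtain ⟨x1, _, hidx⟩ := Nat.find_spec hW
        rw [← hidx]
        exact idx_lt hnd hlen x1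
      · intro x
        by_cases hxd : x ∈ L.drop (Nat.find hW)
        · rw [if_pos hxd]
          obtain ⟨x1, hx1, hidx⟩ := Nat.find_spec hW
          have hge : L.idxOf x1 ≤ L.idxOf x := by
            rw [hidx]; exact (mem_drop_iff hnd hlen _ x).1 hxd
          obtain ⟨w, hw⟩ := hgood.2 x1 x ⟨x1, hx1⟩ hge
          obtain rfl := hpid w x hw
          exact hw
        · rw [if_neg hxd]
          cases hv : a x with
          | none => rfl
          | some y =>
            exfalso
            have hv' : a x = some x := by rw [hv, hpid x y hv]
            have hnotge : ¬ Nat.find hW ≤ L.idxOf x := fun hge =>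
              hxd ((mem_drop_iff hnd hlen _ x).2 hge)
            exact Nat.find_min hW (show L.idxOf x < Nat.find hW by omega) ⟨x, hv', rfl⟩
    · left
      intro x
      exact Option.not_isSome_iff_eq_none.1 fun hs => hne ⟨x, hs⟩
  · intro hc
    apply PEquiv.ext
    intro x
    rw [mul_apply]
    rcases hc with hc | ⟨j, hj, hf⟩
    · rw [hc x]; rfl
    · rw [hf x]
      by_cases hm : x ∈ L.drop j
      · rw [if_pos hm, Option.bind_some, hf x, if_pos hm]
      · rw [if_neg hm]; rfl

end ISW
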